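/- Let $D_1, D_2$ be positive integers with $D_1 \mid D_2$, $D_1 > 1$, and having the same prime divisors. Let $S_2$ denote the subsum of the GL(3) Kloosterman sum $S(m_1, m_2, n_1, n_2; D_1, D_2)$ restricted to terms with $\gcd(B_2, D_2) = 1$. Then $S_2 = S(0, n_1; D_1) \cdot S(m_2, n_2 D_1; D_2)$. -/

import Mathlib

open Finset

/-- `e(x) = e^{2πix}`. -/
noncomputable def efn (x : ℝ) : ℂ := Complex.exp (2 * Real.pi * Complex.I * x)

/-- Classical Kloosterman sum `S(a,b;c) = ∑_{x mod c, (x,c)=1} e((ax + b x̄)/c)`. -/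
noncomputable def Kl (a b : ℤ) (c : ℕ) : ℂ :=
  ∑ x ∈ Finset.range c, if Nat.gcd x c = 1 then
    efn (((a * x + b * (((x : ZMod c)⁻¹).val : ℤ) : ℤ) : ℝ) / c) else 0

def Ycoef (B C D : ℕ) : ℤ := Nat.gcdA B (Nat.gcd C D)
def Zcoef (B C D : ℕ) : ℤ := Nat.gcdB B (Nat.gcd C D) * Nat.gcdA C D

/-- The subsum `S₂` of the GL(3) Kloosterman sum restricted to terms with `gcd(B₂,D₂)=1`. -/
noncomputable def S2sub (m1 m2 n1 n2 : ℤ) (D1 D2 : ℕ) : ℂ :=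
  ∑ B1 ∈ Finset.range D1, ∑ C1 ∈ Finset.range D1,
  ∑ B2 ∈ Finset.range D2, ∑ C2 ∈ Finset.range D2,
    if Nat.gcd B2 D2 = 1 ∧
       Nat.gcd B1 (Nat.gcd C1 D1) = 1 ∧ Nat.gcd B2 (Nat.gcd C2 D2) = 1 ∧
       (D1 * D2) ∣ (D1 * C2 + B1 * B2 + D2 * C1) then
      efn ((((m1 * B1 + n1 * (Ycoef B1 C1 D1 * D2 - Zcoef B1 C1 D1 * B2)) : ℤ) : ℝ) / D1
        + (((m2 * B2 + n2 * (Ycoef B2 C2 D2 * D1 - Zcoef B2 C2 D2 * B1)) : ℤ) : ℝ) / D2)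
    else 0

lemma efn_add (x y : ℝ) : efn (x + y) = efn x * efn y := by
  unfold efn
  rw [← Complex.exp_add]
  congr 1
  push_cast
  ring

lemma efn_int (k : ℤ) : efn k = 1 := by
  unfold efn
  rw [show (2:ℂ) * Real.pi * Complex.I * (k:ℝ) = (k:ℤ) * (2 * Real.pi * Complex.I) by push_cast; ring]
  exact Complex.exp_int_mul_two_pi_mul_I k

lemma efn_congr {D : ℕ} (hD : D ≠ 0) {a b : ℤ} (h : (D:ℤ) ∣ (a - b)) :
    efn ((a:ℝ)/(D:ℝ)) = efn ((b:ℝ)/(D:ℝ)) := by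
  obtain ⟨k, hk⟩ := h
  have ha : a = b + D * k := by linarith
  have h2 : (a:ℝ)/(D:ℝ) = (b:ℝ)/(D:ℝ) + (k:ℝ) := by
    have hD' : (D:ℝ) ≠ 0 := Nat.cast_ne_zero.mpr hD
    field_simp
    push_cast [ha]
    ring
  rw [h2, efn_add, show ((k:ℤ):ℝ) = ((k:ℤ):ℝ) from rfl, efn_int, mul_one]

lemma bezout (B C D : ℕ) (h : Nat.gcd B (Nat.gcd C D) = 1) :
    ((Ycoef B C D * B + Zcoef B C D * C : ℤ) : ZMod D) = 1 := by
  have key : (Ycoef B C D * B + Zcoef B C D * C : ℤ)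
      = 1 - (Nat.gcdB B (Nat.gcd C D) * Nat.gcdB C D) * D := by
    have e1 := Nat.gcd_eq_gcd_ab B (Nat.gcd C D)
    have e2 := Nat.gcd_eq_gcd_ab C D
    rw [h] at e1
    unfold Ycoef Zcoef
    push_cast at e1 e2 ⊢
    linear_combination -e1 - (Nat.gcdB B (Nat.gcd C D)) * e2
  rw [key]
  push_cast
  simp

lemma valcop {n : ℕ} [NeZero n] (z : ZMod n) (hz : IsUnit z) : Nat.gcd z.val n = 1 := by
  have := ZMod.val_coe_unit_coprime hz.unit
  rwa [hz.unit_spec] at this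

/-- the inner `C1`-sum equals the Ramanujan sum. -/
lemma innerC1 (D1 D2 : ℕ) [NeZero D1] (hdvd : D1 ∣ D2) (m1 n1 : ℤ) (B2 : ℕ)
    (hB2 : Nat.Coprime B2 D1) :
    (∑ C1 ∈ Finset.range D1, if Nat.gcd C1 D1 = 1 then
      efn ((((m1 * ((0:ℕ):ℤ) + n1 * (Ycoef 0 C1 D1 * D2 - Zcoef 0 C1 D1 * B2)) : ℤ) : ℝ) / (D1:ℝ))
      else 0) = Kl 0 n1 D1 := by
  have hD1ne : D1 ≠ 0 := NeZero.ne D1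
  have hD2Z : ((D2:ℕ) : ZMod D1) = 0 := by
    obtain ⟨E, hE⟩ := hdvd
    rw [hE]; push_cast; simp
  have hub : IsUnit ((B2:ℕ) : ZMod D1) := (ZMod.isUnit_iff_coprime B2 D1).mpr hB2
  have hbinv : ((B2:ℕ) : ZMod D1)⁻¹ * ((B2:ℕ) : ZMod D1) = 1 := ZMod.inv_mul_of_unit _ hub
  have hbinv' : ((B2:ℕ) : ZMod D1) * ((B2:ℕ) : ZMod D1)⁻¹ = 1 := ZMod.mul_inv_of_unit _ hub
  rw [Kl, ← Finset.sum_filter, ← Finset.sum_filter]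
  refine Finset.sum_nbij' (i := fun C1 => ((-(C1 : ZMod D1) * ((B2:ℕ) : ZMod D1)⁻¹)).val)
    (j := fun x => ((-(x : ZMod D1) * ((B2:ℕ) : ZMod D1))).val) ?_ ?_ ?_ ?_ ?_
  · intro C1 hC1
    simp only [Finset.mem_filter, Finset.mem_range] at hC1 ⊢
    refine ⟨ZMod.val_lt _, valcop _ ?_⟩
    exact (((ZMod.isUnit_iff_coprime C1 D1).mpr hC1.2).neg).mul
      (IsUnit.of_mul_eq_one _ hbinv)
  · intro x hx
    simp only [Finset.mem_filter, Finset.mem_range] at hx ⊢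
    refine ⟨ZMod.val_lt _, valcop _ ?_⟩
    exact (((ZMod.isUnit_iff_coprime x D1).mpr hx.2).neg).mul hub
  · intro C1 hC1
    simp only [Finset.mem_filter, Finset.mem_range] at hC1
    have hcast : ((((-(C1 : ZMod D1) * ((B2:ℕ) : ZMod D1)⁻¹)).val : ℕ) : ZMod D1)
        = -(C1 : ZMod D1) * ((B2:ℕ) : ZMod D1)⁻¹ := ZMod.natCast_rightInverse _
    rw [hcast, show -(-(C1 : ZMod D1) * ((B2:ℕ) : ZMod D1)⁻¹) * ((B2:ℕ) : ZMod D1)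
      = (C1 : ZMod D1) from by linear_combination (C1 : ZMod D1) * hbinv]
    exact ZMod.val_cast_of_lt hC1.1
  · intro x hx
    simp only [Finset.mem_filter, Finset.mem_range] at hx
    have hcast : ((((-(x : ZMod D1) * ((B2:ℕ) : ZMod D1))).val : ℕ) : ZMod D1)
        = -(x : ZMod D1) * ((B2:ℕ) : ZMod D1) := ZMod.natCast_rightInverse _
    rw [hcast, show -(-(x : ZMod D1) * ((B2:ℕ) : ZMod D1)) * ((B2:ℕ) : ZMod D1)⁻¹
      = (x : ZMod D1) from by linear_combination (x : ZMod D1) * hbinv']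
    exact ZMod.val_cast_of_lt hx.1
  · intro C1 hC1
    simp only [Finset.mem_filter, Finset.mem_range] at hC1
    have hgcd : Nat.gcd 0 (Nat.gcd C1 D1) = 1 := by rw [Nat.gcd_zero_left]; exact hC1.2
    have hZ1 : ((Zcoef 0 C1 D1 : ℤ) : ZMod D1) * (C1 : ZMod D1) = 1 := by
      have := bezout 0 C1 D1 hgcd
      push_cast at this
      linear_combination this
    have hcast : ((((-(C1 : ZMod D1) * ((B2:ℕ) : ZMod D1)⁻¹)).val : ℕ) : ZMod D1)
        = -(C1 : ZMod D1) * ((B2:ℕ) : ZMod D1)⁻¹ := ZMod.natCast_rightInverse _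
    have hinv : ((((-(C1 : ZMod D1) * ((B2:ℕ) : ZMod D1)⁻¹)).val : ZMod D1))⁻¹
        = -((Zcoef 0 C1 D1 : ℤ) : ZMod D1) * ((B2:ℕ) : ZMod D1) := by
      rw [hcast]
      apply ZMod.inv_eq_of_mul_eq_one
      linear_combination ((C1 : ZMod D1) * ((Zcoef 0 C1 D1 : ℤ) : ZMod D1)) * hbinv + hZ1
    apply efn_congr hD1ne
    rw [← ZMod.intCast_zmod_eq_zero_iff_dvd]
    push_cast
    rw [hinv, hD2Z]
    rw [show (((-(((Zcoef 0 C1 D1 : ℤ) : ZMod D1)) * ((B2:ℕ) : ZMod D1)).val : ℕ) : ZMod D1)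
      = -(((Zcoef 0 C1 D1 : ℤ) : ZMod D1)) * ((B2:ℕ) : ZMod D1) from ZMod.natCast_rightInverse _]
    ring

/-- `S₂ = S(0,n₁;D₁) · S(m₂,n₂D₁;D₂)` for `1 < D₁ ∣ D₂` with the same prime divisors. -/
theorem stmt3 (D1 D2 : ℕ) (h1 : 1 < D1) (hdvd : D1 ∣ D2)
    (hsame : ∀ p : ℕ, p.Prime → (p ∣ D1 ↔ p ∣ D2)) (m1 m2 n1 n2 : ℤ) :
    S2sub m1 m2 n1 n2 D1 D2 = Kl 0 n1 D1 * Kl m2 (n2 * D1) D2 := by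
  rcases Nat.eq_zero_or_pos D2 with hD2 | hD2
  · simp [S2sub, Kl, hD2]
  have hD1 : 0 < D1 := by omega
  have hD1ne : D1 ≠ 0 := by omega
  have hD2ne : D2 ≠ 0 := by omega
  haveI : NeZero D1 := ⟨hD1ne⟩
  haveI : NeZero D2 := ⟨hD2ne⟩
  obtain ⟨E, hE⟩ := hdvd
  have hdvd' : D1 ∣ D2 := ⟨E, hE⟩
  calc S2sub m1 m2 n1 n2 D1 D2
        = ∑ C1 ∈ Finset.range D1, ∑ B2 ∈ Finset.range D2, ∑ C2 ∈ Finset.range D2,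
          (if Nat.gcd B2 D2 = 1 ∧
              Nat.gcd 0 (Nat.gcd C1 D1) = 1 ∧ Nat.gcd B2 (Nat.gcd C2 D2) = 1 ∧
              (D1 * D2) ∣ (D1 * C2 + 0 * B2 + D2 * C1) then
            efn ((((m1 * ((0:ℕ):ℤ) + n1 * (Ycoef 0 C1 D1 * D2 - Zcoef 0 C1 D1 * B2)) : ℤ) : ℝ) / D1
              + (((m2 * B2 + n2 * (Ycoef B2 C2 D2 * D1 - Zcoef B2 C2 D2 * ((0:ℕ):ℤ))) : ℤ) : ℝ) / D2)
          else 0) := by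
        unfold S2sub
        refine Finset.sum_eq_single_of_mem 0 (Finset.mem_range.mpr hD1) ?_
        intro B1 hB1 hne
        refine Finset.sum_eq_zero fun C1 _ => Finset.sum_eq_zero fun B2 _ =>
          Finset.sum_eq_zero fun C2 _ => if_neg ?_
        rintro ⟨hB2, hg1, hg2, hdiv⟩
        apply hne
        have hd1 : D1 ∣ D1 * C2 + B1 * B2 + D2 * C1 := (dvd_mul_right D1 D2).trans hdiv
        have hd2 : D1 ∣ B1 * B2 := by
          have h3 : D1 ∣ D2 * C1 := hdvd'.mul_right C1
          have h4 : D1 ∣ D1 * C2 := dvd_mul_right _ _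
          have h5 := Nat.dvd_sub (Nat.dvd_sub hd1 h3) h4
          rwa [show D1 * C2 + B1 * B2 + D2 * C1 - D2 * C1 - D1 * C2 = B1 * B2 from by omega] at h5
        have hcop : Nat.Coprime B2 D1 := Nat.Coprime.coprime_dvd_right hdvd' hB2
        exact Nat.eq_zero_of_dvd_of_lt (hcop.symm.dvd_of_dvd_mul_right hd2)
          (Finset.mem_range.mp hB1)
    _ = ∑ B2 ∈ Finset.range D2, ∑ C1 ∈ Finset.range D1, ∑ C2 ∈ Finset.range D2,
          (if Nat.gcd B2 D2 = 1 ∧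
              Nat.gcd 0 (Nat.gcd C1 D1) = 1 ∧ Nat.gcd B2 (Nat.gcd C2 D2) = 1 ∧
              (D1 * D2) ∣ (D1 * C2 + 0 * B2 + D2 * C1) then
            efn ((((m1 * ((0:ℕ):ℤ) + n1 * (Ycoef 0 C1 D1 * D2 - Zcoef 0 C1 D1 * B2)) : ℤ) : ℝ) / D1
              + (((m2 * B2 + n2 * (Ycoef B2 C2 D2 * D1 - Zcoef B2 C2 D2 * ((0:ℕ):ℤ))) : ℤ) : ℝ) / D2)
          else 0) := Finset.sum_comm
    _ = ∑ B2 ∈ Finset.range D2, (if Nat.gcd B2 D2 = 1 then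
            (∑ C1 ∈ Finset.range D1, if Nat.gcd C1 D1 = 1 then
              efn ((((m1 * ((0:ℕ):ℤ) + n1 * (Ycoef 0 C1 D1 * D2 - Zcoef 0 C1 D1 * B2)) : ℤ) : ℝ) / (D1:ℝ))
              else 0)
            * efn (((m2 * B2 + (n2 * D1) * ((((B2 : ZMod D2))⁻¹.val : ℕ) : ℤ) : ℤ) : ℝ) / D2)
          else 0) := by
        refine Finset.sum_congr rfl fun B2 _ => ?_
        by_cases hB2 : Nat.gcd B2 D2 = 1
        · rw [if_pos hB2, Finset.sum_mul]
          refine Finset.sum_congr rfl fun C1 _ => ?_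
          by_cases hC1 : Nat.gcd C1 D1 = 1
          · rw [if_pos hC1]
            have hgc2 : ∀ C2 : ℕ, Nat.gcd B2 (Nat.gcd C2 D2) = 1 := fun C2 =>
              Nat.Coprime.coprime_dvd_right (Nat.gcd_dvd_right C2 D2) hB2
            have hiff : ∀ C2 < D2, (D1 * D2) ∣ (D1 * C2 + 0 * B2 + D2 * C1)
                ↔ C2 = (-(((E * C1 : ℕ) : ZMod D2))).val := by
              intro C2 hC2
              rw [show D1 * C2 + 0 * B2 + D2 * C1 = D1 * (C2 + E * C1) from by rw [hE]; ring]
              rw [hE, Nat.mul_dvd_mul_iff_left hD1, ← hE,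
                ← ZMod.natCast_eq_zero_iff]
              constructor
              · intro h0
                have hcc : (C2 : ZMod D2) = -(((E * C1 : ℕ) : ZMod D2)) := by
                  push_cast at h0 ⊢
                  linear_combination h0
                rw [← ZMod.val_cast_of_lt hC2, hcc]
              · intro h
                subst h
                push_cast
                rw [show (((-((E : ZMod D2) * (C1 : ZMod D2))).val : ℕ) : ZMod D2)
                  = -((E : ZMod D2) * (C1 : ZMod D2)) from ZMod.natCast_rightInverse _]
                ring
            refine (Finset.sum_eq_single_of_mem (-(((E * C1 : ℕ) : ZMod D2))).val
              (Finset.mem_range.mpr (ZMod.val_lt _))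
              (fun b hb hbne => if_neg fun hcond =>
                hbne ((hiff b (Finset.mem_range.mp hb)).mp hcond.2.2.2))).trans ?_
            rw [if_pos ⟨hB2, by rw [Nat.gcd_zero_left]; exact hC1, hgc2 _,
              (hiff _ (ZMod.val_lt _)).mpr rfl⟩]
            rw [efn_add]
            congr 1
            apply efn_congr hD2ne
            rw [← ZMod.intCast_zmod_eq_zero_iff_dvd]
            have hu2 : IsUnit ((B2:ℕ) : ZMod D2) := (ZMod.isUnit_iff_coprime B2 D2).mpr hB2
            have hv : ((B2:ℕ) : ZMod D2) * ((B2:ℕ) : ZMod D2)⁻¹ = 1 := ZMod.mul_inv_of_unit _ hu2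
            have hvv : (((((B2:ℕ) : ZMod D2)⁻¹).val : ℕ) : ZMod D2) = ((B2:ℕ) : ZMod D2)⁻¹ :=
              ZMod.natCast_rightInverse _
            have hbez := bezout B2 ((-(((E * C1 : ℕ) : ZMod D2))).val) D2 (hgc2 _)
            push_cast at hbez ⊢
            have hcs : (((-((E : ZMod D2) * (C1 : ZMod D2))).val : ℕ) : ZMod D2)
                = -((E : ZMod D2) * (C1 : ZMod D2)) := ZMod.natCast_rightInverse _
            rw [hcs] at hbez
            rw [hvv]
            have hD1E : (D1 : ZMod D2) * ((E : ZMod D2) * (C1 : ZMod D2)) = 0 := by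
              rw [show (D1 : ZMod D2) * ((E : ZMod D2) * (C1 : ZMod D2))
                = ((D1 * E : ℕ) : ZMod D2) * (C1 : ZMod D2) from by push_cast; ring,
                ← hE, ZMod.natCast_self, zero_mul]
            linear_combination
              (-((n2:ZMod D2) * (D1:ZMod D2)
                * ((Ycoef B2 ((-((E : ZMod D2) * (C1 : ZMod D2))).val) D2 : ℤ) : ZMod D2))) * hv
              + ((n2:ZMod D2) * (D1:ZMod D2) * ((B2 : ZMod D2))⁻¹) * hbez
              + ((n2:ZMod D2) * ((B2 : ZMod D2))⁻¹
                * ((Zcoef B2 ((-((E : ZMod D2) * (C1 : ZMod D2))).val) D2 : ℤ) : ZMod D2)) * hD1E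
          · rw [if_neg hC1]
            simp only [zero_mul]
            refine Finset.sum_eq_zero fun C2 _ => if_neg ?_
            rintro ⟨_, hg, _, _⟩
            rw [Nat.gcd_zero_left] at hg
            exact hC1 hg
        · rw [if_neg hB2]
          refine Finset.sum_eq_zero fun C1 _ => Finset.sum_eq_zero fun C2 _ => if_neg ?_
          rintro ⟨hg, _⟩
          exact hB2 hg
    _ = ∑ B2 ∈ Finset.range D2, Kl 0 n1 D1 * (if Nat.gcd B2 D2 = 1 then
            efn (((m2 * B2 + (n2 * D1) * ((((B2 : ZMod D2))⁻¹.val : ℕ) : ℤ) : ℤ) : ℝ) / D2)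
          else 0) := by
        refine Finset.sum_congr rfl fun B2 _ => ?_
        by_cases hB2 : Nat.gcd B2 D2 = 1
        · rw [if_pos hB2, if_pos hB2,
            innerC1 D1 D2 hdvd' m1 n1 B2 (Nat.Coprime.coprime_dvd_right hdvd' hB2)]
        · rw [if_neg hB2, if_neg hB2, mul_zero]
    _ = Kl 0 n1 D1 * Kl m2 (n2 * D1) D2 := by
        rw [← Finset.mul_sum]
        rfl
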